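/- A'_1 = 1, and for every n ≥ 2 the set P_down(n) of downward patterns of size n occurring in the Sierpiński triangle T has exactly n² − 3n + 4 elements, i.e. A'_n = n² − 3n + 4. -/

import Mathlib

/-- Whether the unit triangle at row `r`, column `c` of the Sierpiński triangle is filled:
upward units `(r, 2j)` are filled iff `choose r j` is odd; downward units are unfilled. -/
def filled (r c : ℕ) : Bool :=
  decide (c % 2 = 0 ∧ Nat.choose r (c / 2) % 2 = 1)

/-- The upward pattern of size `n` at upward position `(r, c)`. -/
def upPattern (n r c : ℕ) : ℕ × ℕ → Bool := fun q =>
  if q.1 < n ∧ q.2 ≤ 2 * q.1 then filled (r + q.1) (c + q.2) else false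

/-- The set of all upward patterns of size `n` occurring in the Sierpiński triangle. -/
def Pup (n : ℕ) : Set (ℕ × ℕ → Bool) :=
  { p | ∃ r c : ℕ, c % 2 = 0 ∧ c ≤ 2 * r ∧ p = upPattern n r c }

/-- The downward pattern of size `n` at downward position `(r, c)`. -/
def downPattern (n r c : ℕ) : ℕ × ℕ → Bool := fun q =>
  if q.1 < n ∧ q.2 ≤ 2 * (n - 1 - q.1) then filled (r + q.1) (c + 2 * q.1 + q.2) else false

/-- The set of all downward patterns of size `n` occurring in the Sierpiński triangle. -/
def Pdown (n : ℕ) : Set (ℕ × ℕ → Bool) :=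
  { p | ∃ r c : ℕ, c % 2 = 1 ∧ c + 2 * (n - 1) ≤ 2 * r ∧ p = downPattern n r c }

/-- The top-cut pattern of size `n` at upward position `(r, c)` (apex unit removed). -/
def topCutPattern (n r c : ℕ) : ℕ × ℕ → Bool := fun q =>
  if 1 ≤ q.1 ∧ q.1 < n ∧ q.2 ≤ 2 * q.1 then filled (r + q.1) (c + q.2) else false

/-- The set of all top-cut patterns of size `n` occurring in the Sierpiński triangle. -/
def PtopCut (n : ℕ) : Set (ℕ × ℕ → Bool) :=
  { p | ∃ r c : ℕ, c % 2 = 0 ∧ c ≤ 2 * r ∧ p = topCutPattern n r c }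

/-- The bottom-cut pattern of size `n` at upward position `(r, c)`
(both bottom corner units removed). -/
def botCutPattern (n r c : ℕ) : ℕ × ℕ → Bool := fun q =>
  if (q.1 < n ∧ q.2 ≤ 2 * q.1) ∧ ¬(q.1 = n - 1 ∧ (q.2 = 0 ∨ q.2 = 2 * (n - 1)))
  then filled (r + q.1) (c + q.2) else false

/-- The set of all bottom-cut patterns of size `n` occurring in the Sierpiński triangle. -/
def PbotCut (n : ℕ) : Set (ℕ × ℕ → Bool) :=
  { p | ∃ r c : ℕ, c % 2 = 0 ∧ c ≤ 2 * r ∧ p = botCutPattern n r c }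

/-- The fully-cut pattern of size `n` at upward position `(r, c)`
(all three corner units removed). -/
def fullyCutPattern (n r c : ℕ) : ℕ × ℕ → Bool := fun q =>
  if (q.1 < n ∧ q.2 ≤ 2 * q.1) ∧ q ≠ (0, 0) ∧ ¬(q.1 = n - 1 ∧ (q.2 = 0 ∨ q.2 = 2 * (n - 1)))
  then filled (r + q.1) (c + q.2) else false

/-- The set of all fully-cut patterns of size `n` occurring in the Sierpiński triangle. -/
def PfullyCut (n : ℕ) : Set (ℕ × ℕ → Bool) :=
  { p | ∃ r c : ℕ, c % 2 = 0 ∧ c ≤ 2 * r ∧ p = fullyCutPattern n r c }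

/-- Upward patterns of size `m` occurring inside the approximation `T_N`
(rows `0, …, 2^N - 1`). -/
def PupN (N m : ℕ) : Set (ℕ × ℕ → Bool) :=
  { p | ∃ r c : ℕ, c % 2 = 0 ∧ c ≤ 2 * r ∧ r + m ≤ 2 ^ N ∧ p = upPattern m r c }

/-- Upward patterns of size `n` at positions with `r ≡ ρ [MOD 2]` and `c ≡ γ [MOD 4]`. -/
def PupRC (n ρ γ : ℕ) : Set (ℕ × ℕ → Bool) :=
  { p | ∃ r c : ℕ, c % 2 = 0 ∧ c ≤ 2 * r ∧ r % 2 = ρ ∧ c % 4 = γ ∧ p = upPattern n r c }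

/-- Downward patterns of size `n` at positions with `r ≡ ρ [MOD 2]` and `c ≡ γ [MOD 4]`. -/
def PdownRC (n ρ γ : ℕ) : Set (ℕ × ℕ → Bool) :=
  { p | ∃ r c : ℕ, c % 2 = 1 ∧ c + 2 * (n - 1) ≤ 2 * r ∧ r % 2 = ρ ∧ c % 4 = γ ∧
      p = downPattern n r c }

/-- Top-cut patterns of size `n` at positions with `r ≡ ρ [MOD 2]` and `c ≡ γ [MOD 4]`. -/
def PtopCutRC (n ρ γ : ℕ) : Set (ℕ × ℕ → Bool) :=
  { p | ∃ r c : ℕ, c % 2 = 0 ∧ c ≤ 2 * r ∧ r % 2 = ρ ∧ c % 4 = γ ∧ p = topCutPattern n r c }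

/-- Fully-cut patterns of size `n` at positions with `r ≡ ρ [MOD 2]` and `c ≡ γ [MOD 4]`. -/
def PfullyCutRC (n ρ γ : ℕ) : Set (ℕ × ℕ → Bool) :=
  { p | ∃ r c : ℕ, c % 2 = 0 ∧ c ≤ 2 * r ∧ r % 2 = ρ ∧ c % 4 = γ ∧ p = fullyCutPattern n r c }

/-- The everywhere-unfilled upward pattern. -/
def blankUp : ℕ × ℕ → Bool := fun _ => false

/-- The upward pattern that is filled exactly at the apex `(0, 0)`. -/
def topUp : ℕ × ℕ → Bool := fun q => decide (q = (0, 0))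

/-- The size-`N` upward pattern that is filled exactly at the bottom-left corner `(N-1, 0)`. -/
def botleftUp (N : ℕ) : ℕ × ℕ → Bool := fun q => decide (q = (N - 1, 0))

/-- The size-`N` upward pattern filled exactly at the bottom-right corner `(N-1, 2(N-1))`. -/
def botrightUp (N : ℕ) : ℕ × ℕ → Bool := fun q => decide (q = (N - 1, 2 * (N - 1)))

/-- The everywhere-unfilled downward pattern. -/
def blankDown : ℕ × ℕ → Bool := fun _ => false

/-- The size-`N` downward pattern filled exactly at the upward units along the top side:
positions `(0, m)` with `m` odd, `1 ≤ m ≤ 2N - 3`. -/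
def topsideDown (N : ℕ) : ℕ × ℕ → Bool := fun q =>
  decide (q.1 = 0 ∧ q.2 % 2 = 1 ∧ 1 ≤ q.2 ∧ q.2 ≤ 2 * N - 3)

/-- The size-`N` downward pattern filled exactly at the upward units along the left side:
positions `(k, 1)` with `0 ≤ k ≤ N - 2`. -/
def leftsideDown (N : ℕ) : ℕ × ℕ → Bool := fun q =>
  decide (q.2 = 1 ∧ q.1 ≤ N - 2)

/-- The size-`N` downward pattern filled exactly at the upward units along the right side:
positions `(k, 2(N-1-k) - 1)` with `0 ≤ k ≤ N - 2`. -/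
def rightsideDown (N : ℕ) : ℕ × ℕ → Bool := fun q =>
  decide (q.1 ≤ N - 2 ∧ q.2 = 2 * (N - 1 - q.1) - 1)


namespace SierpAux

open Nat

lemma lucas2 (n k : ℕ) : choose n k % 2 = (choose (n % 2) (k % 2) * choose (n / 2) (k / 2)) % 2 := by
  have : Fact (Nat.Prime 2) := ⟨Nat.prime_two⟩
  exact Choose.choose_modEq_choose_mod_mul_choose_div_nat

lemma modsimp (b : ℕ) : (2*b) % 2 = 0 ∧ (2*b) / 2 = b ∧ (2*b+1) % 2 = 1 ∧ (2*b+1)/2 = b := by omega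

lemma I1 (a b : ℕ) : choose (2*a) (2*b) % 2 = choose a b % 2 := by
  have h := lucas2 (2*a) (2*b)
  rw [(modsimp a).1, (modsimp b).1, (modsimp a).2.1, (modsimp b).2.1] at h
  simpa using h

lemma I2 (a b : ℕ) : choose (2*a) (2*b+1) % 2 = 0 := by
  have h := lucas2 (2*a) (2*b+1)
  rw [(modsimp a).1, (modsimp b).2.2.1, (modsimp a).2.1, (modsimp b).2.2.2] at h
  simpa using h

lemma I3 (a b : ℕ) : choose (2*a+1) (2*b) % 2 = choose a b % 2 := by
  have h := lucas2 (2*a+1) (2*b)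
  rw [(modsimp a).2.2.1, (modsimp b).1, (modsimp a).2.2.2, (modsimp b).2.1] at h
  simpa using h

lemma I4 (a b : ℕ) : choose (2*a+1) (2*b+1) % 2 = choose a b % 2 := by
  have h := lucas2 (2*a+1) (2*b+1)
  rw [(modsimp a).2.2.1, (modsimp b).2.2.1, (modsimp a).2.2.2, (modsimp b).2.2.2] at h
  simpa using h






lemma pow2_even : ∀ B j, 0 < j → j < 2^B → choose (2^B) j % 2 = 0 := by
  intro B
  induction B with
  | zero => intro j h1 h2; omega
  | succ B ih =>
    intro j h1 h2
    obtain ⟨b, hb | hb⟩ : ∃ b, j = 2*b ∨ j = 2*b+1 := ⟨j/2, by omega⟩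
    · subst hb
      have : (2:ℕ)^(B+1) = 2*2^B := by ring
      rw [this, I1]
      exact ih b (by omega) (by omega)
    · subst hb
      have : (2:ℕ)^(B+1) = 2*2^B := by ring
      rw [this, I2]

lemma pow2sub1_odd : ∀ B j, j < 2^B → choose (2^B - 1) j % 2 = 1 := by
  intro B
  induction B with
  | zero => intro j h; interval_cases j <;> simp
  | succ B ih =>
    intro j h2
    have hp : (2:ℕ)^(B+1) - 1 = 2*(2^B - 1)+1 := by
      have : (1:ℕ) ≤ 2^B := Nat.one_le_two_pow
      omega
    obtain ⟨b, hb | hb⟩ : ∃ b, j = 2*b ∨ j = 2*b+1 := ⟨j/2, by omega⟩ <;> subst hb <;>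
      rw [hp]
    · rw [I3]; exact ih b (by omega)
    · rw [I4]; exact ih b (by omega)

lemma shift1 : ∀ C r j, r < 2^C → j < 2^C → choose (2^C + r) j % 2 = choose r j % 2 := by
  intro C
  induction C with
  | zero =>
    intro r j h1 h2
    have hr : r = 0 := by omega
    have hj : j = 0 := by omega
    subst hr; subst hj; rfl
  | succ C ih =>
    intro r j h1 h2
    have hpow : (0:ℕ) < 2^C := Nat.pow_pos (by norm_num)
    obtain ⟨r', hr | hr⟩ : ∃ r', r = 2*r' ∨ r = 2*r'+1 := ⟨r/2, by omega⟩ <;>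
    obtain ⟨j', hj | hj⟩ : ∃ j', j = 2*j' ∨ j = 2*j'+1 := ⟨j/2, by omega⟩ <;>
      subst hr <;> subst hj
    · have h : (2:ℕ)^(C+1) + 2*r' = 2*(2^C + r') := by ring
      rw [h, I1, I1]; exact ih r' j' (by omega) (by omega)
    · have h : (2:ℕ)^(C+1) + 2*r' = 2*(2^C + r') := by ring
      rw [h, I2, I2]
    · have h : (2:ℕ)^(C+1) + (2*r'+1) = 2*(2^C + r') + 1 := by ring
      rw [h, I3, I3]; exact ih r' j' (by omega) (by omega)
    · have h : (2:ℕ)^(C+1) + (2*r'+1) = 2*(2^C + r') + 1 := by ring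
      rw [h, I4, I4]; exact ih r' j' (by omega) (by omega)

lemma shift2 : ∀ B r j, r < 2^B → j < 2^B → choose (2^B + r) (2^B + j) % 2 = choose r j % 2 := by
  intro B
  induction B with
  | zero =>
    intro r j h1 h2
    have hr : r = 0 := by omega
    have hj : j = 0 := by omega
    subst hr; subst hj; rfl
  | succ B ih =>
    intro r j h1 h2
    have hpow : (0:ℕ) < 2^B := Nat.pow_pos (by norm_num)
    obtain ⟨r', hr | hr⟩ : ∃ r', r = 2*r' ∨ r = 2*r'+1 := ⟨r/2, by omega⟩ <;>
    obtain ⟨j', hj | hj⟩ : ∃ j', j = 2*j' ∨ j = 2*j'+1 := ⟨j/2, by omega⟩ <;>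
      subst hr <;> subst hj
    · have h1' : (2:ℕ)^(B+1) + 2*r' = 2*(2^B + r') := by ring
      have h2' : (2:ℕ)^(B+1) + 2*j' = 2*(2^B + j') := by ring
      rw [h1', h2', I1, I1]; exact ih r' j' (by omega) (by omega)
    · have h1' : (2:ℕ)^(B+1) + 2*r' = 2*(2^B + r') := by ring
      have h2' : (2:ℕ)^(B+1) + (2*j'+1) = 2*(2^B + j') + 1 := by ring
      rw [h1', h2', I2, I2]
    · have h1' : (2:ℕ)^(B+1) + (2*r'+1) = 2*(2^B + r') + 1 := by ring
      have h2' : (2:ℕ)^(B+1) + 2*j' = 2*(2^B + j') := by ring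
      rw [h1', h2', I3, I3]; exact ih r' j' (by omega) (by omega)
    · have h1' : (2:ℕ)^(B+1) + (2*r'+1) = 2*(2^B + r') + 1 := by ring
      have h2' : (2:ℕ)^(B+1) + (2*j'+1) = 2*(2^B + j') + 1 := by ring
      rw [h1', h2', I4, I4]; exact ih r' j' (by omega) (by omega)










lemma bleq {a b : Bool} (h : a = true ↔ b = true) : a = b := by
  cases a <;> cases b <;> simp_all

def wrd (r s L : ℕ) : ℕ → Bool := fun i => decide (i < L ∧ choose r (s+i) % 2 = 1)

def WS (L : ℕ) : Set (ℕ → Bool) := {w | ∃ r s, w = wrd r s L}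

def zw : ℕ → Bool := fun _ => false
def ow (L : ℕ) : ℕ → Bool := fun i => decide (i < L)
def lw (L : ℕ) : ℕ → Bool := fun i => decide (i = L - 1)
def e0w : ℕ → Bool := fun i => decide (i = 0)

lemma wrd_mem (r s L : ℕ) : wrd r s L ∈ WS L := ⟨r, s, rfl⟩

lemma WS_trunc {w : ℕ → Bool} {L : ℕ} (h : w ∈ WS L) {i : ℕ} (hi : L ≤ i) : w i = false := by
  obtain ⟨r, s, rfl⟩ := h
  simp only [wrd, decide_eq_false_iff_not]
  omega

lemma zw_mem (L : ℕ) : zw ∈ WS L := by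
  refine ⟨0, 1, funext fun i => ?_⟩
  simp [zw, wrd, Nat.choose_eq_zero_of_lt (show 0 < 1 + i by omega)]

lemma ow_mem (L : ℕ) : ow L ∈ WS L := by
  refine ⟨2^L - 1, 0, funext fun i => ?_⟩
  apply bleq
  simp only [ow, wrd, decide_eq_true_eq]
  constructor
  · intro h
    exact ⟨h, by rw [Nat.zero_add]; exact pow2sub1_odd L i (lt_of_lt_of_le h (Nat.le_of_lt (Nat.lt_two_pow_self (n := L))))⟩
  · tauto

lemma lw_mem {L : ℕ} (h : 1 ≤ L) : lw L ∈ WS L := by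
  have hL : L < 2^L := Nat.lt_two_pow_self (n := L)
  refine ⟨2^L, 2^L - (L-1), funext fun i => ?_⟩
  apply bleq
  simp only [lw, wrd, decide_eq_true_eq]
  constructor
  · intro hi
    subst hi
    have : 2^L - (L-1) + (L-1) = 2^L := by omega
    rw [this]
    exact ⟨by omega, by rw [Nat.choose_self]⟩
  · rintro ⟨h1, h2⟩
    by_contra hne
    have hlt : 2^L - (L-1) + i < 2^L := by omega
    have hpos : 0 < 2^L - (L-1) + i := by omega
    rw [pow2_even L _ hpos hlt] at h2
    omega

lemma e0w_mem {L : ℕ} (h : 1 ≤ L) : e0w ∈ WS L := by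
  refine ⟨1, 1, funext fun i => ?_⟩
  apply bleq
  simp only [e0w, wrd, decide_eq_true_eq]
  constructor
  · intro hi
    subst hi
    exact ⟨by omega, by simp [Nat.choose_self]⟩
  · rintro ⟨h1, h2⟩
    by_contra hne
    rw [Nat.choose_eq_zero_of_lt (by omega)] at h2
    omega

lemma wrd_normalize (r s L : ℕ) : ∃ R S, 1 ≤ S ∧ S + L ≤ R ∧ wrd r s L = wrd R S L := by
  obtain ⟨B, hB⟩ : ∃ B, r < 2^B ∧ s + L < 2^B := by
    refine ⟨r + s + L, ?_, ?_⟩ <;>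
    · have h1 := Nat.lt_two_pow_self (n := r + s + L)
      omega
  obtain ⟨C, hC⟩ : ∃ C, 2^B + r < 2^C ∧ 2^B + s + L < 2^C := by
    refine ⟨2^B + r + s + L, ?_, ?_⟩ <;>
    · have h1 := Nat.lt_two_pow_self (n := 2^B + r + s + L)
      omega
  refine ⟨2^C + (2^B + r), 2^B + s, by omega, by omega, ?_⟩
  funext i
  apply bleq
  simp only [wrd, decide_eq_true_eq]
  constructor
  · rintro ⟨h1, h2⟩
    refine ⟨h1, ?_⟩
    have e1 : 2^B + s + i = 2^B + (s+i) := by omega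
    rw [e1, shift1 C _ _ (by omega) (by omega), shift2 B _ _ (by omega) (by omega)]
    exact h2
  · rintro ⟨h1, h2⟩
    refine ⟨h1, ?_⟩
    have e1 : 2^B + s + i = 2^B + (s+i) := by omega
    rw [e1, shift1 C _ _ (by omega) (by omega), shift2 B _ _ (by omega) (by omega)] at h2
    exact h2

def Fe (L : ℕ) (w : ℕ → Bool) : ℕ → Bool := fun i => decide (i < L ∧ i % 2 = 0) && w (i/2)
def Fo (L : ℕ) (w : ℕ → Bool) : ℕ → Bool := fun i => decide (i < L ∧ i % 2 = 1) && w (i/2)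
def Ge (L : ℕ) (w : ℕ → Bool) : ℕ → Bool := fun i => decide (i < L) && w (i/2)
def Go (L : ℕ) (w : ℕ → Bool) : ℕ → Bool := fun i => decide (i < L) && w ((i+1)/2)

lemma E1 (L r' s' : ℕ) : Fe L (wrd r' s' ((L+1)/2)) = wrd (2*r') (2*s') L := by
  funext i
  apply bleq
  simp only [Fe, wrd, Bool.and_eq_true, decide_eq_true_eq]
  obtain ⟨i', hi | hi⟩ : ∃ i', i = 2*i' ∨ i = 2*i'+1 := ⟨i/2, by omega⟩ <;> subst hi
  · have hd : 2*i'/2 = i' := by omega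
    have he : 2*s' + 2*i' = 2*(s'+i') := by ring
    rw [hd, he, I1]
    constructor
    · rintro ⟨⟨h1, _⟩, _, h3⟩; exact ⟨h1, h3⟩
    · rintro ⟨h1, h2⟩; exact ⟨⟨h1, by omega⟩, by omega, h2⟩
  · have he : 2*s' + (2*i'+1) = 2*(s'+i') + 1 := by ring
    rw [he, I2]
    constructor
    · rintro ⟨⟨_, h⟩, _⟩; omega
    · rintro ⟨_, h⟩; omega

lemma E2 (L r' s' : ℕ) : Fo L (wrd r' (s'+1) (L/2)) = wrd (2*r') (2*s'+1) L := by
  funext i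
  apply bleq
  simp only [Fo, wrd, Bool.and_eq_true, decide_eq_true_eq]
  obtain ⟨i', hi | hi⟩ : ∃ i', i = 2*i' ∨ i = 2*i'+1 := ⟨i/2, by omega⟩ <;> subst hi
  · have he : 2*s'+1 + 2*i' = 2*(s'+i') + 1 := by ring
    rw [he, I2]
    constructor
    · rintro ⟨⟨_, h⟩, _⟩; omega
    · rintro ⟨_, h⟩; omega
  · have hd : (2*i'+1)/2 = i' := by omega
    have he : 2*s'+1 + (2*i'+1) = 2*(s'+1+i') := by ring
    rw [hd, he, I1]
    constructor
    · rintro ⟨⟨h1, _⟩, _, h3⟩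
      exact ⟨h1, h3⟩
    · rintro ⟨h1, h2⟩
      exact ⟨⟨h1, by omega⟩, by omega, h2⟩

lemma E3 (L r' s' : ℕ) : Ge L (wrd r' s' ((L+1)/2)) = wrd (2*r'+1) (2*s') L := by
  funext i
  apply bleq
  simp only [Ge, wrd, Bool.and_eq_true, decide_eq_true_eq]
  obtain ⟨i', hi | hi⟩ : ∃ i', i = 2*i' ∨ i = 2*i'+1 := ⟨i/2, by omega⟩ <;> subst hi
  · have hd : 2*i'/2 = i' := by omega
    have he : 2*s' + 2*i' = 2*(s'+i') := by ring
    rw [hd, he, I3]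
    constructor
    · rintro ⟨h1, _, h3⟩; exact ⟨h1, h3⟩
    · rintro ⟨h1, h2⟩; exact ⟨h1, by omega, h2⟩
  · have hd : (2*i'+1)/2 = i' := by omega
    have he : 2*s' + (2*i'+1) = 2*(s'+i') + 1 := by ring
    rw [hd, he, I4]
    constructor
    · rintro ⟨h1, _, h3⟩; exact ⟨h1, h3⟩
    · rintro ⟨h1, h2⟩; exact ⟨h1, by omega, h2⟩

lemma E4 (L r' s' : ℕ) : Go L (wrd r' s' (L/2+1)) = wrd (2*r'+1) (2*s'+1) L := by
  funext i
  apply bleq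
  simp only [Go, wrd, Bool.and_eq_true, decide_eq_true_eq]
  obtain ⟨i', hi | hi⟩ : ∃ i', i = 2*i' ∨ i = 2*i'+1 := ⟨i/2, by omega⟩ <;> subst hi
  · have hd : (2*i'+1)/2 = i' := by omega
    have he : 2*s'+1 + 2*i' = 2*(s'+i') + 1 := by ring
    rw [hd, he, I4]
    constructor
    · rintro ⟨h1, _, h3⟩; exact ⟨h1, h3⟩
    · rintro ⟨h1, h2⟩; exact ⟨h1, by omega, h2⟩
  · have hd : (2*i'+1+1)/2 = i'+1 := by omega
    have he : 2*s'+1 + (2*i'+1) = 2*(s'+(i'+1)) := by ring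
    rw [hd, he, I3]
    constructor
    · rintro ⟨h1, _, h3⟩; exact ⟨h1, h3⟩
    · rintro ⟨h1, h2⟩; exact ⟨h1, by omega, h2⟩

-- evaluation lemmas
lemma evalFe {L : ℕ} (w : ℕ → Bool) {i : ℕ} (h1 : i < L) (h2 : i % 2 = 0) :
    Fe L w i = w (i/2) := by simp [Fe, h1, h2]
lemma evalFo {L : ℕ} (w : ℕ → Bool) {i : ℕ} (h1 : i < L) (h2 : i % 2 = 1) :
    Fo L w i = w (i/2) := by simp [Fo, h1, h2]
lemma evalGe {L : ℕ} (w : ℕ → Bool) {i : ℕ} (h1 : i < L) :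
    Ge L w i = w (i/2) := by simp [Ge, h1]
lemma evalGo {L : ℕ} (w : ℕ → Bool) {i : ℕ} (h1 : i < L) :
    Go L w i = w ((i+1)/2) := by simp [Go, h1]

-- vanishing lemmas
lemma vanFe {L : ℕ} (w : ℕ → Bool) {i : ℕ} (h : i % 2 = 1 ∨ L ≤ i) : Fe L w i = false := by
  have : ¬(i < L ∧ i % 2 = 0) := by omega
  simp [Fe, this]
lemma vanFo {L : ℕ} (w : ℕ → Bool) {i : ℕ} (h : i % 2 = 0 ∨ L ≤ i) : Fo L w i = false := by
  have : ¬(i < L ∧ i % 2 = 1) := by omega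
  simp [Fo, this]
lemma vanGe {L : ℕ} (w : ℕ → Bool) {i : ℕ} (h : L ≤ i) : Ge L w i = false := by
  simp [Ge]; omega
lemma vanGo {L : ℕ} (w : ℕ → Bool) {i : ℕ} (h : L ≤ i) : Go L w i = false := by
  simp [Go]; omega

-- maps on special words
lemma Fe_zw (L : ℕ) : Fe L zw = zw := by funext i; simp [Fe, zw]
lemma Fo_zw (L : ℕ) : Fo L zw = zw := by funext i; simp [Fo, zw]
lemma Ge_zw (L : ℕ) : Ge L zw = zw := by funext i; simp [Ge, zw]
lemma Go_zw (L : ℕ) : Go L zw = zw := by funext i; simp [Go, zw]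

lemma Fe_lw {L : ℕ} (h : L % 2 = 1) : Fe L (lw ((L+1)/2)) = lw L := by
  funext i; apply bleq
  simp only [Fe, lw, Bool.and_eq_true, decide_eq_true_eq]
  omega

lemma Ge_lw {L : ℕ} (h : L % 2 = 1) : Ge L (lw ((L+1)/2)) = lw L := by
  funext i; apply bleq
  simp only [Ge, lw, Bool.and_eq_true, decide_eq_true_eq]
  omega

lemma Fo_lw {L : ℕ} (h : L % 2 = 0) (h2 : 2 ≤ L) : Fo L (lw (L/2)) = lw L := by
  funext i; apply bleq
  simp only [Fo, lw, Bool.and_eq_true, decide_eq_true_eq]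
  omega

lemma Go_lw {L : ℕ} (h : L % 2 = 0) (h2 : 2 ≤ L) : Go L (lw (L/2+1)) = lw L := by
  funext i; apply bleq
  simp only [Go, lw, Bool.and_eq_true, decide_eq_true_eq]
  omega

lemma Fe_e0w {L : ℕ} (h : 1 ≤ L) : Fe L e0w = e0w := by
  funext i; apply bleq
  simp only [Fe, e0w, Bool.and_eq_true, decide_eq_true_eq]
  omega

lemma Go_e0w {L : ℕ} (h : 1 ≤ L) : Go L e0w = e0w := by
  funext i; apply bleq
  simp only [Go, e0w, Bool.and_eq_true, decide_eq_true_eq]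
  omega

lemma Ge_ow (L : ℕ) : Ge L (ow ((L+1)/2)) = ow L := by
  funext i; apply bleq
  simp only [Ge, ow, Bool.and_eq_true, decide_eq_true_eq]
  omega

lemma Go_ow (L : ℕ) : Go L (ow (L/2+1)) = ow L := by
  funext i; apply bleq
  simp only [Go, ow, Bool.and_eq_true, decide_eq_true_eq]
  omega

lemma cover {L : ℕ} :
    WS L = Fe L '' WS ((L+1)/2) ∪ Fo L '' WS (L/2) ∪ Ge L '' WS ((L+1)/2) ∪ Go L '' WS (L/2+1) := by
  ext w
  constructor
  · rintro ⟨r, s, rfl⟩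
    obtain ⟨r', hr | hr⟩ : ∃ r', r = 2*r' ∨ r = 2*r'+1 := ⟨r/2, by omega⟩ <;>
    obtain ⟨s', hs | hs⟩ : ∃ s', s = 2*s' ∨ s = 2*s'+1 := ⟨s/2, by omega⟩ <;>
      subst hr <;> subst hs
    · exact Or.inl (Or.inl (Or.inl ⟨wrd r' s' _, wrd_mem _ _ _, E1 L r' s'⟩))
    · exact Or.inl (Or.inl (Or.inr ⟨wrd r' (s'+1) _, wrd_mem _ _ _, E2 L r' s'⟩))
    · exact Or.inl (Or.inr ⟨wrd r' s' _, wrd_mem _ _ _, E3 L r' s'⟩)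
    · exact Or.inr ⟨wrd r' s' _, wrd_mem _ _ _, E4 L r' s'⟩
  · rintro (((⟨w', ⟨r', s', rfl⟩, rfl⟩ | ⟨w', ⟨r', s', rfl⟩, rfl⟩) | ⟨w', ⟨r', s', rfl⟩, rfl⟩) |
      ⟨w', ⟨r', s', rfl⟩, rfl⟩)
    · rw [E1]; exact wrd_mem _ _ _
    · obtain ⟨R, S, hS, _, heq⟩ := wrd_normalize r' s' (L/2)
      obtain ⟨S', rfl⟩ : ∃ S', S = S'+1 := ⟨S-1, by omega⟩
      rw [heq, E2]; exact wrd_mem _ _ _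
    · rw [E3]; exact wrd_mem _ _ _
    · rw [E4]; exact wrd_mem _ _ _

lemma inj1 {L : ℕ} : Set.InjOn (Fe L) (WS ((L+1)/2)) := by
  intro w1 h1 w2 h2 heq
  funext i
  by_cases hi : i < (L+1)/2
  · have := congrFun heq (2*i)
    rw [evalFe w1 (by omega) (by omega), evalFe w2 (by omega) (by omega)] at this
    simpa [Nat.mul_div_cancel_left] using this
  · rw [WS_trunc h1 (by omega), WS_trunc h2 (by omega)]

lemma inj2 {L : ℕ} : Set.InjOn (Fo L) (WS (L/2)) := by
  intro w1 h1 w2 h2 heq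
  funext i
  by_cases hi : i < L/2
  · have := congrFun heq (2*i+1)
    rw [evalFo w1 (by omega) (by omega), evalFo w2 (by omega) (by omega)] at this
    simpa [show (2*i+1)/2 = i by omega] using this
  · rw [WS_trunc h1 (by omega), WS_trunc h2 (by omega)]

lemma inj3 {L : ℕ} : Set.InjOn (Ge L) (WS ((L+1)/2)) := by
  intro w1 h1 w2 h2 heq
  funext i
  by_cases hi : i < (L+1)/2
  · have := congrFun heq (2*i)
    rw [evalGe w1 (by omega), evalGe w2 (by omega)] at this
    simpa [Nat.mul_div_cancel_left] using this
  · rw [WS_trunc h1 (by omega), WS_trunc h2 (by omega)]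

lemma inj4 {L : ℕ} (hL : 1 ≤ L) : Set.InjOn (Go L) (WS (L/2+1)) := by
  intro w1 h1 w2 h2 heq
  funext i
  by_cases hi : i < L/2+1
  · match i, hi with
    | 0, _ =>
      have := congrFun heq 0
      rwa [evalGo w1 (by omega), evalGo w2 (by omega)] at this
    | (i'+1), hi =>
      have := congrFun heq (2*i'+1)
      rw [evalGo w1 (by omega), evalGo w2 (by omega)] at this
      simpa [show (2*i'+1+1)/2 = i'+1 by omega] using this
  · rw [WS_trunc h1 (by omega), WS_trunc h2 (by omega)]

lemma int12 {L : ℕ} (hL : 1 ≤ L) :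
    (Fe L '' WS ((L+1)/2)) ∩ (Fo L '' WS (L/2)) = {zw} := by
  apply Set.Subset.antisymm
  · rintro w ⟨⟨w1, h1, rfl⟩, ⟨w2, h2, heq⟩⟩
    funext i
    by_cases hp : i % 2 = 0
    · rw [← heq, vanFo w2 (Or.inl hp)]; rfl
    · rw [vanFe w1 (Or.inl (by omega))]; rfl
  · rintro w rfl
    exact ⟨⟨zw, zw_mem _, Fe_zw L⟩, ⟨zw, zw_mem _, Fo_zw L⟩⟩

lemma int3o {L : ℕ} (hL : L % 2 = 1) :
    (Ge L '' WS ((L+1)/2)) ∩ ((Fe L '' WS ((L+1)/2)) ∪ (Fo L '' WS (L/2))) = {zw, lw L} := by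
  have h1L : 1 ≤ L := by omega
  apply Set.Subset.antisymm
  · rintro w ⟨⟨w3, h3, rfl⟩, (⟨w1, h1, heq⟩ | ⟨w2, h2, heq⟩)⟩
    · -- A3 ∩ A1
      have hv : ∀ j, j ≠ (L+1)/2 - 1 → w3 j = false := by
        intro j hj
        by_cases hj2 : 2*j+1 < L
        · have e := congrFun heq (2*j+1)
          rw [vanFe w1 (Or.inl (by omega)), evalGe w3 hj2, show (2*j+1)/2 = j by omega] at e
          exact e.symm
        · exact WS_trunc h3 (by omega)
      by_cases hb : w3 ((L+1)/2 - 1) = true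
      · right
        have : w3 = lw ((L+1)/2) := by
          funext j
          by_cases hj : j = (L+1)/2 - 1
          · subst hj; rw [hb]; simp [lw]
          · rw [hv j hj]; simp [lw, hj]
        rw [this, Ge_lw hL]; rfl
      · left
        have : w3 = zw := by
          funext j
          by_cases hj : j = (L+1)/2 - 1
          · subst hj; simpa [zw] using hb
          · exact hv j hj
        rw [this, Ge_zw]
    · -- A3 ∩ A2
      left
      have : w3 = zw := by
        funext j
        show w3 j = false
        by_cases hj2 : 2*j < L
        · have e := congrFun heq (2*j)
          rw [vanFo w2 (Or.inl (by omega)), evalGe w3 hj2, show 2*j/2 = j by omega] at e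
          exact e.symm
        · exact WS_trunc h3 (by omega)
      rw [this, Ge_zw]
  · rintro w (rfl | rfl)
    · exact ⟨⟨zw, zw_mem _, Ge_zw L⟩, Or.inl ⟨zw, zw_mem _, Fe_zw L⟩⟩
    · exact ⟨⟨lw ((L+1)/2), lw_mem (by omega), Ge_lw hL⟩,
        Or.inl ⟨lw ((L+1)/2), lw_mem (by omega), Fe_lw hL⟩⟩

lemma int3e {L : ℕ} (hL : L % 2 = 0) :
    (Ge L '' WS ((L+1)/2)) ∩ ((Fe L '' WS ((L+1)/2)) ∪ (Fo L '' WS (L/2))) = {zw} := by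
  apply Set.Subset.antisymm
  · rintro w ⟨⟨w3, h3, rfl⟩, (⟨w1, h1, heq⟩ | ⟨w2, h2, heq⟩)⟩
    · have : w3 = zw := by
        funext j
        by_cases hj2 : 2*j+1 < L
        · have e := congrFun heq (2*j+1)
          rw [vanFe w1 (Or.inl (by omega)), evalGe w3 hj2, show (2*j+1)/2 = j by omega] at e
          exact e.symm
        · exact WS_trunc h3 (by omega)
      rw [this, Ge_zw]; rfl
    · have : w3 = zw := by
        funext j
        by_cases hj2 : 2*j < L
        · have e := congrFun heq (2*j)
          rw [vanFo w2 (Or.inl (by omega)), evalGe w3 hj2, show 2*j/2 = j by omega] at e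
          exact e.symm
        · exact WS_trunc h3 (by omega)
      rw [this, Ge_zw]; rfl
  · rintro w rfl
    exact ⟨⟨zw, zw_mem _, Ge_zw L⟩, Or.inl ⟨zw, zw_mem _, Fe_zw L⟩⟩

lemma int4o {L : ℕ} (hL : L % 2 = 1) (h3 : 3 ≤ L) :
    (Go L '' WS (L/2+1)) ∩
      ((Fe L '' WS ((L+1)/2)) ∪ (Fo L '' WS (L/2)) ∪ (Ge L '' WS ((L+1)/2))) =
      {zw, e0w, ow L} := by
  apply Set.Subset.antisymm
  · rintro w ⟨⟨w4, h4, rfl⟩, ((⟨w1, h1, heq⟩ | ⟨w2, h2, heq⟩) | ⟨w3, h3', heq⟩)⟩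
    · -- A4 ∩ A1 ⊆ {zw, e0w}
      have hv : ∀ j, j ≠ 0 → w4 j = false := by
        rintro (_ | j') hj
        · omega
        by_cases hj2 : 2*j'+1 < L
        · have e := congrFun heq (2*j'+1)
          rw [vanFe w1 (Or.inl (by omega)), evalGo w4 hj2,
            show (2*j'+1+1)/2 = j'+1 by omega] at e
          exact e.symm
        · exact WS_trunc h4 (by omega)
      by_cases hb : w4 0 = true
      · right; left
        have : w4 = e0w := by
          funext j
          by_cases hj : j = 0
          · subst hj; rw [hb]; simp [e0w]
          · rw [hv j hj]; simp [e0w, hj]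
        rw [this, Go_e0w (by omega)]
      · left
        have : w4 = zw := by
          funext j
          show w4 j = false
          by_cases hj : j = 0
          · subst hj; simpa using hb
          · exact hv j hj
        rw [this, Go_zw]
    · -- A4 ∩ A2 ⊆ {zw} (L odd)
      left
      have : w4 = zw := by
        funext j
        show w4 j = false
        match j with
        | 0 =>
          have e := congrFun heq 0
          rw [vanFo w2 (Or.inl (by omega)), evalGo w4 (by omega)] at e
          simpa using e.symm
        | j'+1 =>
          by_cases hj2 : 2*j'+2 < L
          · have e := congrFun heq (2*j'+2)
            rw [vanFo w2 (Or.inl (by omega)), evalGo w4 hj2,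
              show (2*j'+2+1)/2 = j'+1 by omega] at e
            exact e.symm
          · exact WS_trunc h4 (by omega)
      rw [this, Go_zw]
    · -- A4 ∩ A3 ⊆ {zw, ow L}
      have key : ∀ j, j ≤ L/2 → w4 j = w4 0 := by
        intro j hj
        induction j with
        | zero => rfl
        | succ j' ih =>
          have h21 : 2*j'+1 < L := by omega
          have h20 : 2*j' < L := by omega
          have e1 := congrFun heq (2*j'+1)
          rw [evalGo w4 h21, evalGe w3 h21, show (2*j'+1+1)/2 = j'+1 by omega,
            show (2*j'+1)/2 = j' by omega] at e1
          have e2 := congrFun heq (2*j')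
          rw [evalGo w4 h20, evalGe w3 h20, show (2*j'+1)/2 = j' by omega,
            show (2*j')/2 = j' by omega] at e2
          rw [← e1, e2, ih (by omega)]
      by_cases hb : w4 0 = true
      · right; right
        have : w4 = ow (L/2+1) := by
          funext j
          by_cases hj : j ≤ L/2
          · rw [key j hj, hb]; simp [ow]; omega
          · rw [WS_trunc h4 (by omega)]; simp [ow]; omega
        rw [this, Go_ow]; exact rfl
      · left
        have : w4 = zw := by
          funext j
          show w4 j = false
          by_cases hj : j ≤ L/2
          · rw [key j hj]; simpa using hb
          · exact WS_trunc h4 (by omega)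
        rw [this, Go_zw]
  · rintro w (rfl | rfl | rfl)
    · exact ⟨⟨zw, zw_mem _, Go_zw L⟩, Or.inl (Or.inl ⟨zw, zw_mem _, Fe_zw L⟩)⟩
    · exact ⟨⟨e0w, e0w_mem (by omega), Go_e0w (by omega)⟩,
        Or.inl (Or.inl ⟨e0w, e0w_mem (by omega), Fe_e0w (by omega)⟩)⟩
    · exact ⟨⟨ow (L/2+1), ow_mem _, Go_ow L⟩, Or.inr ⟨ow ((L+1)/2), ow_mem _, Ge_ow L⟩⟩

lemma int4e {L : ℕ} (hL : L % 2 = 0) (h2 : 2 ≤ L) :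
    (Go L '' WS (L/2+1)) ∩
      ((Fe L '' WS ((L+1)/2)) ∪ (Fo L '' WS (L/2)) ∪ (Ge L '' WS ((L+1)/2))) =
      {zw, e0w, ow L, lw L} := by
  apply Set.Subset.antisymm
  · rintro w ⟨⟨w4, h4, rfl⟩, ((⟨w1, h1, heq⟩ | ⟨w2, h2', heq⟩) | ⟨w3, h3', heq⟩)⟩
    · -- A4 ∩ A1 ⊆ {zw, e0w}
      have hv : ∀ j, j ≠ 0 → w4 j = false := by
        rintro (_ | j') hj
        · omega
        by_cases hj2 : 2*j'+1 < L
        · have e := congrFun heq (2*j'+1)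
          rw [vanFe w1 (Or.inl (by omega)), evalGo w4 hj2,
            show (2*j'+1+1)/2 = j'+1 by omega] at e
          exact e.symm
        · exact WS_trunc h4 (by omega)
      by_cases hb : w4 0 = true
      · right; left
        have : w4 = e0w := by
          funext j
          by_cases hj : j = 0
          · subst hj; rw [hb]; simp [e0w]
          · rw [hv j hj]; simp [e0w, hj]
        rw [this, Go_e0w (by omega)]
      · left
        have : w4 = zw := by
          funext j
          show w4 j = false
          by_cases hj : j = 0
          · subst hj; simpa using hb
          · exact hv j hj
        rw [this, Go_zw]
    · -- A4 ∩ A2 ⊆ {zw, lw L} (L even)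
      have hv : ∀ j, j ≠ L/2 → w4 j = false := by
        rintro (_ | j') hj
        · have e := congrFun heq 0
          rw [vanFo w2 (Or.inl (by omega)), evalGo w4 (by omega)] at e
          simpa using e.symm
        by_cases hj2 : 2*j'+2 < L
        · have e := congrFun heq (2*j'+2)
          rw [vanFo w2 (Or.inl (by omega)), evalGo w4 hj2,
            show (2*j'+2+1)/2 = j'+1 by omega] at e
          exact e.symm
        · exact WS_trunc h4 (by omega)
      by_cases hb : w4 (L/2) = true
      · right; right; right
        have : w4 = lw (L/2+1) := by
          funext j
          by_cases hj : j = L/2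
          · subst hj; rw [hb]; simp [lw]
          · rw [hv j hj]; simp [lw]; omega
        rw [this, Go_lw hL h2]; exact rfl
      · left
        have : w4 = zw := by
          funext j
          show w4 j = false
          by_cases hj : j = L/2
          · subst hj; simpa using hb
          · exact hv j hj
        rw [this, Go_zw]
    · -- A4 ∩ A3 ⊆ {zw, ow L}
      have key : ∀ j, j ≤ L/2 → w4 j = w4 0 := by
        intro j hj
        induction j with
        | zero => rfl
        | succ j' ih =>
          have h21 : 2*j'+1 < L := by omega
          have h20 : 2*j' < L := by omega
          have e1 := congrFun heq (2*j'+1)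
          rw [evalGo w4 h21, evalGe w3 h21, show (2*j'+1+1)/2 = j'+1 by omega,
            show (2*j'+1)/2 = j' by omega] at e1
          have e2 := congrFun heq (2*j')
          rw [evalGo w4 h20, evalGe w3 h20, show (2*j'+1)/2 = j' by omega,
            show (2*j')/2 = j' by omega] at e2
          rw [← e1, e2, ih (by omega)]
      by_cases hb : w4 0 = true
      · right; right; left
        have : w4 = ow (L/2+1) := by
          funext j
          by_cases hj : j ≤ L/2
          · rw [key j hj, hb]; simp [ow]; omega
          · rw [WS_trunc h4 (by omega)]; simp [ow]; omega
        rw [this, Go_ow]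
      · left
        have : w4 = zw := by
          funext j
          show w4 j = false
          by_cases hj : j ≤ L/2
          · rw [key j hj]; simpa using hb
          · exact WS_trunc h4 (by omega)
        rw [this, Go_zw]
  · rintro w (rfl | rfl | rfl | rfl)
    · exact ⟨⟨zw, zw_mem _, Go_zw L⟩, Or.inl (Or.inl ⟨zw, zw_mem _, Fe_zw L⟩)⟩
    · exact ⟨⟨e0w, e0w_mem (by omega), Go_e0w (by omega)⟩,
        Or.inl (Or.inl ⟨e0w, e0w_mem (by omega), Fe_e0w (by omega)⟩)⟩
    · exact ⟨⟨ow (L/2+1), ow_mem _, Go_ow L⟩, Or.inr ⟨ow ((L+1)/2), ow_mem _, Ge_ow L⟩⟩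
    · exact ⟨⟨lw (L/2+1), lw_mem (by omega), Go_lw hL h2⟩,
        Or.inl (Or.inr ⟨lw (L/2), lw_mem (by omega), Fo_lw hL h2⟩)⟩

lemma zw_ne_ow {L : ℕ} (h : 1 ≤ L) : zw ≠ ow L := fun he => by
  have := congrFun he 0; simp [zw, ow] at this; omega
lemma zw_ne_lw {L : ℕ} : zw ≠ lw L := fun he => by
  have := congrFun he (L-1); simp [zw, lw] at this
lemma zw_ne_e0w : zw ≠ e0w := fun he => by
  have := congrFun he 0; simp [zw, e0w] at this
lemma e0w_ne_ow {L : ℕ} (h : 2 ≤ L) : e0w ≠ ow L := fun he => by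
  have := congrFun he 1; simp [e0w, ow] at this; omega
lemma e0w_ne_lw {L : ℕ} (h : 2 ≤ L) : e0w ≠ lw L := fun he => by
  have := congrFun he 0; simp [e0w, lw] at this; omega
lemma ow_ne_lw {L : ℕ} (h : 2 ≤ L) : ow L ≠ lw L := fun he => by
  have := congrFun he 0; simp [ow, lw] at this; omega

lemma WS1_eq : WS 1 = {zw, ow 1} := by
  apply Set.Subset.antisymm
  · rintro w ⟨r, s, rfl⟩
    by_cases h : choose r s % 2 = 1
    · right
      funext i; apply bleq
      simp only [wrd, ow, decide_eq_true_eq]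
      constructor
      · tauto
      · intro h1
        have hi : i = 0 := by omega
        subst hi
        exact ⟨h1, by simpa using h⟩
    · left
      funext i; apply bleq
      simp only [wrd, zw, decide_eq_true_eq]
      constructor
      · rintro ⟨h1, h2⟩
        have hi : i = 0 := by omega
        subst hi
        simp at h2
        exact absurd h2 h
      · simp
  · rintro w (rfl | rfl)
    · exact zw_mem 1
    · exact ow_mem 1

lemma WS2_eq : WS 2 = {zw, ow 2, e0w, lw 2} := by
  apply Set.Subset.antisymm
  · rintro w ⟨r, s, rfl⟩
    by_cases h0 : choose r s % 2 = 1 <;> by_cases h1 : choose r (s+1) % 2 = 1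
    · right; left
      funext i; apply bleq
      simp only [wrd, ow, decide_eq_true_eq]
      constructor
      · tauto
      · intro hi
        refine ⟨hi, ?_⟩
        obtain rfl | rfl : i = 0 ∨ i = 1 := by omega
        · simpa using h0
        · exact h1
    · right; right; left
      funext i; apply bleq
      simp only [wrd, e0w, decide_eq_true_eq]
      constructor
      · rintro ⟨hi, hP⟩
        obtain rfl | rfl : i = 0 ∨ i = 1 := by omega
        · rfl
        · exact absurd hP h1
      · rintro rfl
        exact ⟨by omega, by simpa using h0⟩
    · right; right; right
      funext i; apply bleq
      simp only [wrd, lw, decide_eq_true_eq]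
      constructor
      · rintro ⟨hi, hP⟩
        obtain rfl | rfl : i = 0 ∨ i = 1 := by omega
        · simp at hP
          exact absurd hP h0
        · rfl
      · rintro rfl
        exact ⟨by omega, h1⟩
    · left
      funext i; apply bleq
      simp only [wrd, zw, decide_eq_true_eq]
      constructor
      · rintro ⟨hi, hP⟩
        obtain rfl | rfl : i = 0 ∨ i = 1 := by omega
        · simp at hP
          exact absurd hP h0
        · exact absurd hP h1
      · simp
  · rintro w (rfl | rfl | rfl | rfl)
    · exact zw_mem 2
    · exact ow_mem 2
    · exact e0w_mem (by omega)
    · exact lw_mem (by omega)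

lemma count_WS (L : ℕ) : 1 ≤ L → (WS L).Finite ∧ (WS L).ncard + L = L*L + 2 := by
  induction L using Nat.strong_induction_on with
  | _ L ih =>
  intro hL
  by_cases hL1 : L = 1
  · subst hL1
    rw [WS1_eq]
    exact ⟨Set.toFinite _, by rw [Set.ncard_pair (zw_ne_ow (by omega))]⟩
  by_cases hL2 : L = 2
  · subst hL2
    rw [WS2_eq]
    refine ⟨Set.toFinite _, ?_⟩
    rw [Set.ncard_insert_of_notMem (by
        simp only [Set.mem_insert_iff, Set.mem_singleton_iff]
        push_neg
        exact ⟨zw_ne_ow (by omega), zw_ne_e0w, zw_ne_lw⟩),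
      Set.ncard_insert_of_notMem (by
        simp only [Set.mem_insert_iff, Set.mem_singleton_iff]
        push_neg
        exact ⟨(e0w_ne_ow (by omega)).symm, ow_ne_lw (by omega)⟩),
      Set.ncard_pair (e0w_ne_lw (by omega))]
  have h3L : 3 ≤ L := by omega
  have hm := ih ((L+1)/2) (by omega) (by omega)
  have hf := ih (L/2) (by omega) (by omega)
  have hp := ih (L/2+1) (by omega) (by omega)
  have fin1 : (Fe L '' WS ((L+1)/2)).Finite := hm.1.image _
  have fin2 : (Fo L '' WS (L/2)).Finite := hf.1.image _
  have fin3 : (Ge L '' WS ((L+1)/2)).Finite := hm.1.image _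
  have fin4 : (Go L '' WS (L/2+1)).Finite := hp.1.image _
  have hcov := cover (L := L)
  have finL : (WS L).Finite := by
    rw [hcov]; exact ((fin1.union fin2).union fin3).union fin4
  refine ⟨finL, ?_⟩
  have c1 : (Fe L '' WS ((L+1)/2)).ncard = (WS ((L+1)/2)).ncard :=
    Set.ncard_image_of_injOn inj1
  have c2 : (Fo L '' WS (L/2)).ncard = (WS (L/2)).ncard :=
    Set.ncard_image_of_injOn inj2
  have c3 : (Ge L '' WS ((L+1)/2)).ncard = (WS ((L+1)/2)).ncard :=
    Set.ncard_image_of_injOn inj3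
  have c4 : (Go L '' WS (L/2+1)).ncard = (WS (L/2+1)).ncard :=
    Set.ncard_image_of_injOn (inj4 (by omega))
  have E12 := Set.ncard_union_add_ncard_inter (Fe L '' WS ((L+1)/2)) (Fo L '' WS (L/2)) fin1 fin2
  rw [int12 (by omega), Set.ncard_singleton, c1, c2] at E12
  have E123 := Set.ncard_union_add_ncard_inter
    (Fe L '' WS ((L+1)/2) ∪ Fo L '' WS (L/2)) (Ge L '' WS ((L+1)/2)) (fin1.union fin2) fin3
  rw [Set.inter_comm, c3] at E123
  have EAll := Set.ncard_union_add_ncard_inter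
    (Fe L '' WS ((L+1)/2) ∪ Fo L '' WS (L/2) ∪ Ge L '' WS ((L+1)/2)) (Go L '' WS (L/2+1))
    ((fin1.union fin2).union fin3) fin4
  rw [Set.inter_comm, c4, ← hcov] at EAll
  by_cases hpar : L % 2 = 1
  · rw [int3o hpar, Set.ncard_pair zw_ne_lw] at E123
    rw [int4o hpar h3L] at EAll
    have htri : ({zw, e0w, ow L} : Set (ℕ → Bool)).ncard = 3 := by
      rw [Set.ncard_insert_of_notMem (by
          simp only [Set.mem_insert_iff, Set.mem_singleton_iff]
          push_neg
          exact ⟨zw_ne_e0w, zw_ne_ow (by omega)⟩),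
        Set.ncard_pair (e0w_ne_ow (by omega))]
    rw [htri] at EAll
    obtain ⟨k, hk⟩ : ∃ k, L = 2*k+1 := ⟨L/2, by omega⟩
    have hm2 : (L+1)/2 = k+1 := by omega
    have hf2 : L/2 = k := by omega
    have hp2 : L/2+1 = k+1 := by omega
    simp only [hm2, hf2, hp2] at hm hf hp E12 E123 EAll
    have q1 : (k+1)*(k+1) = k*k+2*k+1 := by ring
    have q2 : L*L = 4*(k*k)+4*k+1 := by rw [hk]; ring
    obtain ⟨K, hK⟩ : ∃ K, k*k = K := ⟨_, rfl⟩
    rw [hK] at q1 q2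
    omega
  · have hpar' : L % 2 = 0 := by omega
    rw [int3e hpar', Set.ncard_singleton] at E123
    rw [int4e hpar' (by omega)] at EAll
    have hquad : ({zw, e0w, ow L, lw L} : Set (ℕ → Bool)).ncard = 4 := by
      rw [Set.ncard_insert_of_notMem (by
          simp only [Set.mem_insert_iff, Set.mem_singleton_iff]
          push_neg
          exact ⟨zw_ne_e0w, zw_ne_ow (by omega), zw_ne_lw⟩),
        Set.ncard_insert_of_notMem (by
          simp only [Set.mem_insert_iff, Set.mem_singleton_iff]
          push_neg
          exact ⟨e0w_ne_ow (by omega), e0w_ne_lw (by omega)⟩),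
        Set.ncard_pair (ow_ne_lw (by omega))]
    rw [hquad] at EAll
    obtain ⟨k, hk⟩ : ∃ k, L = 2*k := ⟨L/2, by omega⟩
    have hm2 : (L+1)/2 = k := by omega
    have hf2 : L/2 = k := by omega
    have hp2 : L/2+1 = k+1 := by omega
    simp only [hm2, hf2, hp2] at hm hf hp E12 E123 EAll
    have q1 : (k+1)*(k+1) = k*k+2*k+1 := by ring
    have q2 : L*L = 4*(k*k) := by rw [hk]; ring
    obtain ⟨K, hK⟩ : ∃ K, k*k = K := ⟨_, rfl⟩
    rw [hK] at q1 q2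
    omega

-- ## Bridge to downward patterns

def Fd (v : ℕ → Bool) : ℕ → ℕ → Bool
  | 0, t => v t
  | k+1, t => xor (Fd v k t) (Fd v k (t+1))

lemma parity_xor (x y : ℕ) :
    decide ((x+y) % 2 = 1) = xor (decide (x%2=1)) (decide (y%2=1)) := by
  apply bleq
  cases hb1 : decide (x%2=1) <;> cases hb2 : decide (y%2=1) <;>
    simp_all [decide_eq_true_eq] <;> omega

lemma detF (r a : ℕ) (v : ℕ → Bool) (hv : ∀ i, v i = decide (choose r (a+1+i) % 2 = 1)) :
    ∀ k t, decide (choose (r+k) (a+1+k+t) % 2 = 1) = Fd v k t := by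
  intro k
  induction k with
  | zero =>
    intro t
    show _ = v t
    rw [hv t]
    simp
  | succ k ih =>
    intro t
    have e1 : r+(k+1) = (r+k)+1 := by ring
    have e2 : a+1+(k+1)+t = (a+1+k+t)+1 := by ring
    rw [e1, e2, Nat.choose_succ_succ (r+k) (a+1+k+t)]
    have e3 : (a+1+k+t)+1 = a+1+k+(t+1) := by ring
    rw [parity_xor]
    show _ = Fd v (k+1) t
    have hFd : Fd v (k+1) t = xor (Fd v k t) (Fd v k (t+1)) := rfl
    rw [hFd, ih t, show (a+1+k+t).succ = a+1+k+(t+1) by omega, ih (t+1)]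

lemma Fd_congr (v v' : ℕ → Bool) :
    ∀ k t, (∀ i, t ≤ i → i ≤ t+k → v i = v' i) → Fd v k t = Fd v' k t := by
  intro k
  induction k with
  | zero => intro t h; exact h t le_rfl (by omega)
  | succ k ih =>
    intro t h
    show xor (Fd v k t) (Fd v k (t+1)) = xor (Fd v' k t) (Fd v' k (t+1))
    rw [ih t (fun i h1 h2 => h i h1 (by omega)), ih (t+1) (fun i h1 h2 => h i (by omega) (by omega))]

lemma filled_odd {r c : ℕ} (h : c % 2 = 1) : filled r c = false := by
  simp only [filled, decide_eq_false_iff_not]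
  omega

lemma filled_even (r j : ℕ) : filled r (2*j) = decide (choose r j % 2 = 1) := by
  apply bleq
  simp only [filled, decide_eq_true_eq]
  rw [Nat.mul_div_cancel_left j (by norm_num), Nat.mul_mod_right]
  tauto

def extW (p : ℕ × ℕ → Bool) : ℕ → Bool := fun i => p (0, 2*i+1)

lemma ext_down {n r a : ℕ} (hn : 2 ≤ n) :
    extW (downPattern n r (2*a+1)) = wrd r (a+1) (n-1) := by
  funext i
  show (if ((0:ℕ) < n ∧ 2*i+1 ≤ 2*(n-1-0)) then filled (r+0) (2*a+1+2*0+(2*i+1)) else false) = _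
  by_cases hi : i < n - 1
  · rw [if_pos (by omega)]
    have e : 2*a+1+2*0+(2*i+1) = 2*(a+1+i) := by ring
    rw [e, filled_even]
    apply bleq
    simp only [wrd, decide_eq_true_eq, Nat.add_zero]
    tauto
  · rw [if_neg (by omega)]
    symm
    simp only [wrd, decide_eq_false_iff_not]
    omega

lemma Pdown_image {n : ℕ} (hn : 2 ≤ n) : extW '' Pdown n = WS (n-1) := by
  apply Set.Subset.antisymm
  · rintro w ⟨p, ⟨r, c, hc, hle, rfl⟩, rfl⟩
    obtain ⟨a, rfl⟩ : ∃ a, c = 2*a+1 := ⟨c/2, by omega⟩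
    rw [ext_down hn]
    exact wrd_mem _ _ _
  · rintro w ⟨R, S, rfl⟩
    obtain ⟨R', S', hS1, hSL, heq⟩ := wrd_normalize R S (n-1)
    obtain ⟨a, rfl⟩ : ∃ a, S' = a+1 := ⟨S'-1, by omega⟩
    exact ⟨downPattern n R' (2*a+1), ⟨R', 2*a+1, by omega, by omega, rfl⟩,
      by rw [ext_down hn, ← heq]⟩

lemma Pdown_inj {n : ℕ} (hn : 2 ≤ n) : Set.InjOn extW (Pdown n) := by
  rintro p ⟨r, c, hc, hle, rfl⟩ p' ⟨r', c', hc', hle', rfl⟩ heq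
  obtain ⟨a, rfl⟩ : ∃ a, c = 2*a+1 := ⟨c/2, by omega⟩
  obtain ⟨a', rfl⟩ : ∃ a', c' = 2*a'+1 := ⟨c'/2, by omega⟩
  rw [ext_down hn, ext_down hn] at heq
  funext q
  obtain ⟨k, mq⟩ := q
  show (if (k < n ∧ mq ≤ 2*(n-1-k)) then filled (r+k) (2*a+1+2*k+mq) else false) =
    (if (k < n ∧ mq ≤ 2*(n-1-k)) then filled (r'+k) (2*a'+1+2*k+mq) else false)
  by_cases hcond : k < n ∧ mq ≤ 2*(n-1-k)
  · rw [if_pos hcond, if_pos hcond]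
    obtain ⟨t, ht | ht⟩ : ∃ t, mq = 2*t ∨ mq = 2*t+1 := ⟨mq/2, by omega⟩
    · subst ht
      rw [filled_odd (by omega), filled_odd (by omega)]
    · subst ht
      have e1 : 2*a+1+2*k+(2*t+1) = 2*(a+1+k+t) := by ring
      have e2 : 2*a'+1+2*k+(2*t+1) = 2*(a'+1+k+t) := by ring
      rw [e1, e2, filled_even, filled_even]
      have d1 := detF r a (fun i => decide (choose r (a+1+i) % 2 = 1)) (fun i => rfl) k t
      have d2 := detF r' a' (fun i => decide (choose r' (a'+1+i) % 2 = 1)) (fun i => rfl) k t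
      rw [d1, d2]
      apply Fd_congr
      intro i h1 h2
      have hiL : i < n-1 := by omega
      have hthis := congrFun heq i
      simp only [wrd] at hthis
      rw [decide_eq_decide] at hthis
      apply bleq
      simp only [decide_eq_true_eq]
      constructor
      · intro hP; exact (hthis.mp ⟨hiL, hP⟩).2
      · intro hP; exact (hthis.mpr ⟨hiL, hP⟩).2
  · rw [if_neg hcond, if_neg hcond]

lemma Pdown_ncard {n : ℕ} (hn : 2 ≤ n) :
    (Pdown n).Finite ∧ (Pdown n).ncard + (n-1) = (n-1)*(n-1) + 2 := by
  have hc := count_WS (n-1) (by omega)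
  have himg := Pdown_image hn
  have hinj := Pdown_inj hn
  have hfin : (Pdown n).Finite := Set.Finite.of_finite_image (himg ▸ hc.1) hinj
  have hcard : (Pdown n).ncard = (WS (n-1)).ncard := by
    rw [← himg, Set.ncard_image_of_injOn hinj]
  exact ⟨hfin, by omega⟩

lemma Pdown1_ncard : (Pdown 1).ncard = 1 := by
  have hPd : Pdown 1 = {downPattern 1 1 1} := by
    apply Set.Subset.antisymm
    · rintro p ⟨r, c, hc, hle, rfl⟩
      show downPattern 1 r c = downPattern 1 1 1
      funext q
      obtain ⟨k, mq⟩ := q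
      show (if (k < 1 ∧ mq ≤ 2*(1-1-k)) then filled (r+k) (c+2*k+mq) else false) =
        (if (k < 1 ∧ mq ≤ 2*(1-1-k)) then filled (1+k) (1+2*k+mq) else false)
      by_cases hcond : k < 1 ∧ mq ≤ 2*(1-1-k)
      · rw [if_pos hcond, if_pos hcond]
        have hk : k = 0 := by omega
        have hm : mq = 0 := by omega
        subst hk; subst hm
        rw [filled_odd (by omega), filled_odd (by omega)]
      · rw [if_neg hcond, if_neg hcond]
    · rintro p rfl
      exact ⟨1, 1, by omega, by omega, rfl⟩
  rw [hPd, Set.ncard_singleton]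

end SierpAux

theorem sierpinski_down_count :
    (Pdown 1).ncard = 1 ∧
    ∀ n : ℕ, 2 ≤ n →
      (Pdown n).Finite ∧ ((Pdown n).ncard : ℤ) = (n : ℤ) ^ 2 - 3 * n + 4 := by
  constructor
  · exact SierpAux.Pdown1_ncard
  · intro n hn
    obtain ⟨hfin, hcard⟩ := SierpAux.Pdown_ncard hn
    refine ⟨hfin, ?_⟩
    have h1 : 1 ≤ n := by omega
    zify [h1] at hcard
    have : ((Pdown n).ncard : ℤ) = ((n:ℤ)-1)*((n:ℤ)-1) + 2 - ((n:ℤ)-1) := by linarith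
    rw [this]; ring
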